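/- arXiv:1507.03935 — 3 statements merged into one kernel-verified Lean document; each statement's English description precedes it below -/
import Mathlib

section
/- Let W be a Whitney covering of an open set Ω ⊊ ℝ^d, let η ∈ (0, d), r > 0, g ∈ L^1_loc(Ω) nonnegative, and Q ∈ W. Then ∑_{S ∈ W, D(Q,S) < r} ∫_S g(y) dy / D(Q,S)^{d-η} ≤ C(d,η) · r^η · inf_{y∈Q} Mg(y), where M is the Hardy–Littlewood maximal operator and D(Q,S) = ℓ(Q) + dist(Q,S) + ℓ(S). -/
open MeasureTheory ENNReal

/-- A cube in `ℝ^d` (with the sup norm) with given center and side length. -/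
def cube {d : ℕ} (c : Fin d → ℝ) (l : ℝ) : Set (Fin d → ℝ) := Metric.closedBall c (l / 2)

/-- Distance between two sets. -/
noncomputable def setDist {X : Type*} [PseudoMetricSpace X] (A B : Set X) : ℝ :=
  sInf ((fun p : X × X => dist p.1 p.2) '' A ×ˢ B)

/-- A Whitney covering of an open set `Ω ⊊ ℝ^d` by dyadic cubes, with comparability
constant `CW`. -/
structure Whitney (d : ℕ) (Ω : Set (Fin d → ℝ)) (CW : ℝ) (ι : Type) where
  center : ι → (Fin d → ℝ)
  side : ι → ℝ
  side_pos : ∀ i, 0 < side i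
  dyadic : ∀ i, ∃ k : ℤ, side i = 2 ^ k
  cnt : Countable ι
  disj : Pairwise (fun i j : ι =>
    Disjoint (interior (cube (center i) (side i))) (interior (cube (center j) (side j))))
  covers : (⋃ i, cube (center i) (side i)) = Ω
  dist_lower : ∀ i, ∀ x ∈ cube (center i) (side i),
    CW * side i ≤ Metric.infDist x (frontier Ω)
  dist_upper : ∀ i, ∃ x ∈ cube (center i) (side i),
    Metric.infDist x (frontier Ω) ≤ 4 * CW * side i

/-- The long distance `D(Q,S) = ℓ(Q) + dist(Q,S) + ℓ(S)` between Whitney cubes. -/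
noncomputable def longDist {d : ℕ} {Ω : Set (Fin d → ℝ)} {CW : ℝ} {ι : Type}
    (W : Whitney d Ω CW ι) (i j : ι) : ℝ :=
  W.side i + setDist (cube (W.center i) (W.side i)) (cube (W.center j) (W.side j)) + W.side j

/-- The non-centered Hardy–Littlewood maximal function (over balls). -/
noncomputable def maximal {d : ℕ} (g : (Fin d → ℝ) → ℝ) (x : Fin d → ℝ) : ℝ≥0∞ :=
  ⨆ (z : Fin d → ℝ) (r : ℝ) (_ : x ∈ Metric.ball z r),
    (∫⁻ y in Metric.ball z r, ENNReal.ofReal (g y)) / volume (Metric.ball z r)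


lemma setDist_nonneg {X : Type*} [PseudoMetricSpace X] (A B : Set X) : 0 ≤ setDist A B := by
  apply Real.sInf_nonneg
  rintro x ⟨⟨p, q⟩, _, rfl⟩
  exact dist_nonneg

lemma dist_le_setDist_add {X : Type*} [PseudoMetricSpace X] {A B : Set X}
    (hA : A.Nonempty) (hB : B.Nonempty) {a b : X} {ra rb : ℝ}
    (hAa : A ⊆ Metric.closedBall a ra) (hBb : B ⊆ Metric.closedBall b rb) :
    dist a b ≤ setDist A B + ra + rb := by
  have h : dist a b - ra - rb ≤ setDist A B := by
    apply le_csInf ((hA.prod hB).image _)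
    rintro x ⟨⟨p, q⟩, ⟨hp, hq⟩, rfl⟩
    have h1 : dist a p ≤ ra := Metric.mem_closedBall'.1 (hAa hp)
    have h2 : dist q b ≤ rb := Metric.mem_closedBall.1 (hBb hq)
    have := dist_triangle4 a p q b
    simp only [Prod.fst, Prod.snd]
    linarith
  linarith
lemma cube_nonempty {d : ℕ} (c : Fin d → ℝ) {l : ℝ} (hl : 0 < l) : (cube c l).Nonempty :=
  ⟨c, Metric.mem_closedBall_self (by positivity)⟩

lemma longDist_pos {d : ℕ} {Ω : Set (Fin d → ℝ)} {CW : ℝ} {ι : Type}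
    (W : Whitney d Ω CW ι) (i j : ι) : 0 < longDist W i j := by
  have h1 := W.side_pos i
  have h2 := W.side_pos j
  have h3 := setDist_nonneg (cube (W.center i) (W.side i)) (cube (W.center j) (W.side j))
  unfold longDist; linarith

lemma cube_subset_ball {d : ℕ} {Ω : Set (Fin d → ℝ)} {CW : ℝ} {ι : Type}
    (W : Whitney d Ω CW ι) {i j : ι} {t : ℝ} (hD : longDist W i j < t) :
    cube (W.center j) (W.side j) ⊆ Metric.ball (W.center i) (2 * t) := by
  have hi := W.side_pos i
  have hj := W.side_pos j
  have hc : dist (W.center i) (W.center j) ≤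
      setDist (cube (W.center i) (W.side i)) (cube (W.center j) (W.side j))
        + W.side i / 2 + W.side j / 2 :=
    dist_le_setDist_add (cube_nonempty _ hi) (cube_nonempty _ hj)
      Set.Subset.rfl Set.Subset.rfl
  intro x hx
  have hx' : dist x (W.center j) ≤ W.side j / 2 := Metric.mem_closedBall.1 hx
  have ht : dist x (W.center i) < 2 * t := by
    have := dist_triangle x (W.center j) (W.center i)
    have hcd : dist (W.center j) (W.center i) = dist (W.center i) (W.center j) := dist_comm _ _
    unfold longDist at hD
    have h0 := setDist_nonneg (cube (W.center i) (W.side i)) (cube (W.center j) (W.side j))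
    nlinarith [longDist_pos W i j]
  exact Metric.mem_ball.2 ht
lemma cube_ae_ball {d : ℕ} (hd : 0 < d) (c : Fin d → ℝ) {l : ℝ} (hl : 0 < l) :
    (cube c l : Set (Fin d → ℝ)) =ᵐ[volume] Metric.ball c (l / 2) := by
  haveI : Nonempty (Fin d) := ⟨⟨0, hd⟩⟩
  haveI : Nontrivial (Fin d → ℝ) := Function.nontrivial
  have hs : volume (Metric.sphere c (l / 2)) = 0 :=
    Measure.addHaar_sphere (volume : Measure (Fin d → ℝ)) c (l / 2)
  rw [Filter.eventuallyEq_set]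
  apply MeasureTheory.ae_iff.2
  refine measure_mono_null ?_ hs
  intro x hx
  simp only [Set.mem_setOf_eq, cube, not_iff] at hx
  have : x ∈ Metric.closedBall c (l/2) ∧ x ∉ Metric.ball c (l/2) := by
    have hsub := @Metric.ball_subset_closedBall _ _ c (l/2)
    by_cases h : x ∈ Metric.closedBall c (l/2) <;> by_cases h' : x ∈ Metric.ball c (l/2) <;>
      first | exact ⟨h, fun hb => (not_iff.1 hx).2 hb h⟩ | tauto
  rw [Metric.mem_closedBall, Metric.mem_ball, not_lt] at this
  exact le_antisymm this.1 this.2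
lemma sumA {d : ℕ} (hd : 0 < d) {Ω : Set (Fin d → ℝ)} {CW : ℝ} {ι : Type}
    (W : Whitney d Ω CW ι) (i : ι) {t : ℝ} (ht : 0 < t)
    (g : (Fin d → ℝ) → ℝ) {y : Fin d → ℝ} (hy : y ∈ cube (W.center i) (W.side i)) :
    (∑' j : ι, if longDist W i j < t then
        ∫⁻ x in cube (W.center j) (W.side j), ENNReal.ofReal (g x) else 0)
      ≤ ENNReal.ofReal ((4 * t) ^ d) * maximal g y := by
  haveI : Nonempty (Fin d) := ⟨⟨0, hd⟩⟩
  haveI : Nontrivial (Fin d → ℝ) := Function.nontrivial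
  haveI := W.cnt
  by_cases hex : ∃ j, longDist W i j < t
  swap
  · push_neg at hex
    have hz := tsum_congr (L := SummationFilter.unconditional ι) (f := fun j : ι => if longDist W i j < t then
        ∫⁻ x in cube (W.center j) (W.side j), ENNReal.ofReal (g x) else 0)
      (g := fun _ => (0 : ℝ≥0∞)) (fun j => if_neg (not_lt.2 (hex j)))
    rw [hz, tsum_zero]
    exact zero_le
  -- y is in the big ball
  have hsi : W.side i < t := by
    obtain ⟨j0, hj0⟩ := hex
    have h0 := setDist_nonneg (cube (W.center i) (W.side i)) (cube (W.center j0) (W.side j0))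
    have := W.side_pos j0
    unfold longDist at hj0; linarith
  have hyB : y ∈ Metric.ball (W.center i) (2 * t) := by
    have : dist y (W.center i) ≤ W.side i / 2 := Metric.mem_closedBall.1 hy
    exact Metric.mem_ball.2 (by linarith)
  -- replace cubes by open balls
  set s : ι → Set (Fin d → ℝ) := fun j =>
    if longDist W i j < t then Metric.ball (W.center j) (W.side j / 2) else ∅ with hs
  have hterm : ∀ j : ι, (if longDist W i j < t then
      ∫⁻ x in cube (W.center j) (W.side j), ENNReal.ofReal (g x) else 0)
      = ∫⁻ x in s j, ENNReal.ofReal (g x) := by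
    intro j
    by_cases h : longDist W i j < t
    · rw [if_pos h, hs]; simp only [if_pos h]
      exact setLIntegral_congr (cube_ae_ball hd _ (W.side_pos j))
    · rw [if_neg h, hs]; simp only [if_neg h, Measure.restrict_empty, lintegral_zero_measure]
  calc (∑' j : ι, if longDist W i j < t then
        ∫⁻ x in cube (W.center j) (W.side j), ENNReal.ofReal (g x) else 0)
      = ∑' j : ι, ∫⁻ x in s j, ENNReal.ofReal (g x) := tsum_congr hterm
    _ = ∫⁻ x in ⋃ j, s j, ENNReal.ofReal (g x) := by
        refine (lintegral_iUnion (fun j => ?_) ?_ _).symm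
        · by_cases h : longDist W i j < t <;> simp [hs, h, Metric.isOpen_ball.measurableSet]
        · intro a b hab
          simp only [Function.onFun, hs]
          by_cases ha : longDist W i a < t
          · by_cases hb : longDist W i b < t
            · simp only [if_pos ha, if_pos hb]
              have := W.disj hab
              have hia : Metric.ball (W.center a) (W.side a / 2)
                  ⊆ interior (cube (W.center a) (W.side a)) := by
                rw [cube, interior_closedBall _ (by have := W.side_pos a; positivity)]
              have hib : Metric.ball (W.center b) (W.side b / 2)
                  ⊆ interior (cube (W.center b) (W.side b)) := by
                rw [cube, interior_closedBall _ (by have := W.side_pos b; positivity)]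
              exact this.mono hia hib
            · simp [if_neg hb]
          · simp [if_neg ha]
    _ ≤ ∫⁻ x in Metric.ball (W.center i) (2 * t), ENNReal.ofReal (g x) := by
        refine lintegral_mono_set (Set.iUnion_subset fun j => ?_)
        by_cases h : longDist W i j < t
        · simp only [hs, if_pos h]
          exact (Metric.ball_subset_closedBall).trans (cube_subset_ball W h)
        · simp [hs, if_neg h]
    _ ≤ ENNReal.ofReal ((4 * t) ^ d) * maximal g y := by
        have hvol : volume (Metric.ball (W.center i) (2 * t))
            = ENNReal.ofReal ((4 * t) ^ d) := by
          rw [Real.volume_pi_ball _ (by linarith)]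
          norm_num [Fintype.card_fin]; ring_nf
        have hM : (∫⁻ x in Metric.ball (W.center i) (2 * t), ENNReal.ofReal (g x))
            / volume (Metric.ball (W.center i) (2 * t)) ≤ maximal g y :=
          le_iSup_of_le (W.center i) (le_iSup_of_le (2 * t) (le_iSup_of_le hyB le_rfl))
        have h0 : volume (Metric.ball (W.center i) (2 * t)) ≠ 0 := by
          rw [hvol]; simp only [ne_eq, ENNReal.ofReal_eq_zero, not_le]; positivity
        have htop : volume (Metric.ball (W.center i) (2 * t)) ≠ ⊤ := by
          rw [hvol]; exact ENNReal.ofReal_ne_top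
        rw [ENNReal.div_le_iff h0 htop] at hM
        calc (∫⁻ x in Metric.ball (W.center i) (2 * t), ENNReal.ofReal (g x))
            ≤ maximal g y * volume (Metric.ball (W.center i) (2 * t)) := hM
          _ = ENNReal.ofReal ((4 * t) ^ d) * maximal g y := by rw [hvol, mul_comm]
lemma pointB {D r α : ℝ} (hD : 0 < D) (hDr : D < r) (hα : α ≤ 0) :
    ENNReal.ofReal (D ^ α) ≤ ENNReal.ofReal ((2:ℝ) ^ (-α)) *
      ∑' k : ℕ, if D < r / 2 ^ k then ENNReal.ofReal ((r / 2 ^ k) ^ α) else 0 := by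
  have hr : 0 < r := hD.trans hDr
  have hexn : ∃ n : ℕ, ¬ (D < r / 2 ^ n) := by
    obtain ⟨n, hn⟩ := pow_unbounded_of_one_lt (r / D) (one_lt_two (α := ℝ))
    refine ⟨n, not_lt.2 ?_⟩
    rw [div_lt_iff₀ hD] at hn
    rw [div_le_iff₀ (by positivity)]
    nlinarith
  classical
  let K' := Nat.find hexn
  have hK'pos : 0 < K' := by
    rcases Nat.eq_zero_or_pos K' with h | h
    · exfalso; have := Nat.find_spec hexn
      rw [show Nat.find hexn = K' from rfl, h] at this
      simp only [pow_zero, div_one] at this; exact this hDr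
    · exact h
  set K := K' - 1 with hK
  have hKmem : D < r / 2 ^ K := by
    have := Nat.find_min hexn (m := K) (by omega)
    exact not_not.1 this
  have hKout : r / 2 ^ (K + 1) ≤ D := by
    have hspec := Nat.find_spec hexn
    have : K + 1 = K' := by omega
    rw [this]; exact not_lt.1 hspec
  -- real inequality
  have hbase : 0 < r / 2 ^ (K + 1) := by positivity
  have h1 : D ^ α ≤ (r / 2 ^ (K + 1)) ^ α :=
    Real.rpow_le_rpow_of_nonpos hbase hKout hα
  have h2 : (r / 2 ^ (K + 1) : ℝ) ^ α = (2:ℝ) ^ (-α) * (r / 2 ^ K) ^ α := by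
    have : (r / 2 ^ (K + 1) : ℝ) = (r / 2 ^ K) / 2 := by ring
    rw [this, Real.div_rpow (by positivity) (by norm_num), Real.rpow_neg (by norm_num)]
    field_simp
  have h3 : ENNReal.ofReal ((r / 2 ^ K) ^ α)
      ≤ ∑' k : ℕ, if D < r / 2 ^ k then ENNReal.ofReal ((r / 2 ^ k) ^ α) else 0 := by
    have := ENNReal.le_tsum (f := fun k : ℕ =>
      if D < r / 2 ^ k then ENNReal.ofReal ((r / 2 ^ k) ^ α) else 0) K
    rwa [if_pos hKmem] at this
  calc ENNReal.ofReal (D ^ α) ≤ ENNReal.ofReal ((2:ℝ) ^ (-α) * (r / 2 ^ K) ^ α) := by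
        apply ENNReal.ofReal_le_ofReal; rw [← h2]; exact h1
    _ = ENNReal.ofReal ((2:ℝ) ^ (-α)) * ENNReal.ofReal ((r / 2 ^ K) ^ α) := by
        rw [ENNReal.ofReal_mul (by positivity)]
    _ ≤ _ := mul_le_mul_right h3 _
lemma tcompute {r η : ℝ} (hr : 0 < r) (d k : ℕ) :
    (r / 2 ^ k) ^ (η - (d:ℝ)) * (4 * (r / 2 ^ k)) ^ d
      = 4 ^ d * r ^ η * ((2:ℝ)⁻¹ ^ η) ^ k := by
  set t : ℝ := r / 2 ^ k with htdef
  have ht : 0 < t := by positivity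
  have h1 : t ^ (η - (d:ℝ)) * (4 * t) ^ d = 4 ^ d * (t ^ (η - (d:ℝ)) * t ^ ((d:ℕ):ℝ)) := by
    rw [mul_pow, ← Real.rpow_natCast t d]; ring
  have h2 : t ^ (η - (d:ℝ)) * t ^ ((d:ℕ):ℝ) = t ^ η := by
    rw [← Real.rpow_add ht]; norm_num
  have h3 : t ^ η = r ^ η * ((2:ℝ)⁻¹ ^ η) ^ k := by
    have htr : t = r * (2:ℝ)⁻¹ ^ k := by
      rw [htdef, div_eq_mul_inv, inv_pow]
    rw [htr, Real.mul_rpow hr.le (by positivity)]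
    congr 1
    rw [← Real.rpow_natCast ((2:ℝ)⁻¹) k, ← Real.rpow_natCast ((2:ℝ)⁻¹ ^ η) k,
      ← Real.rpow_mul (by norm_num), ← Real.rpow_mul (by norm_num), mul_comm]
  rw [h1, h2, h3]; ring


/-- for a Whitney covering `W` of an open `Ω ⊊ ℝ^d`, `0 < η < d`, `r > 0`,
`g ≥ 0` locally integrable on `Ω` and `Q ∈ W`:
`∑_{S : D(Q,S) < r} (∫_S g) / D(Q,S)^{d-η} ≤ C(d,η) · r^η · inf_{y ∈ Q} Mg(y)`. -/
theorem stmt8 (d : ℕ) (hd : 0 < d) (η : ℝ) (hη0 : 0 < η) (hηd : η < d) :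
    ∃ C : ℝ, 0 < C ∧
      ∀ (CW : ℝ), 1 ≤ CW →
      ∀ (Ω : Set (Fin d → ℝ)), IsOpen Ω → Ω ≠ Set.univ →
      ∀ (ι : Type) (W : Whitney d Ω CW ι) (i : ι) (r : ℝ), 0 < r →
      ∀ (g : (Fin d → ℝ) → ℝ), (∀ x, 0 ≤ g x) → LocallyIntegrable g volume →
        (∑' j : {j : ι // longDist W i j < r},
            (∫⁻ y in cube (W.center j.1) (W.side j.1), ENNReal.ofReal (g y))
              / ENNReal.ofReal ((longDist W i j.1) ^ ((d : ℝ) - η)))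
          ≤ ENNReal.ofReal (C * r ^ η) *
              ⨅ (y : Fin d → ℝ) (_ : y ∈ cube (W.center i) (W.side i)), maximal g y := by
    classical
  set q : ℝ := (2:ℝ)⁻¹ ^ η with hqdef
  have hq0 : 0 ≤ q := Real.rpow_nonneg (by norm_num) _
  have hq1 : q < 1 := Real.rpow_lt_one (by norm_num) (by norm_num) hη0
  set C : ℝ := (2:ℝ) ^ ((d:ℝ) - η) * 4 ^ d * (1 - q)⁻¹ with hCdef
  have hC : 0 < C := by
    apply mul_pos (mul_pos (Real.rpow_pos_of_pos two_pos _) (by positivity))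
    simp only [inv_pos]; linarith
  refine ⟨C, hC, ?_⟩
  intro CW hCW Ω hΩo hΩu ι W i r hr g hg hgi
  haveI := W.cnt
  set α : ℝ := η - (d:ℝ) with hαdef
  have hα : α ≤ 0 := by rw [hαdef]; linarith
  set f : ι → ℝ≥0∞ := fun j => ∫⁻ x in cube (W.center j) (W.side j), ENNReal.ofReal (g x)
    with hfdef
  set K : ℝ≥0∞ := ENNReal.ofReal (C * r ^ η) with hKdef
  have hK0 : K ≠ 0 := by
    rw [hKdef]; simp only [ne_eq, ENNReal.ofReal_eq_zero, not_le]
    exact mul_pos hC (Real.rpow_pos_of_pos hr _)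
  have hKtop : K ≠ ⊤ := ENNReal.ofReal_ne_top
  have key : ∀ y ∈ cube (W.center i) (W.side i),
      (∑' j : {j : ι // longDist W i j < r}, f j.1
          / ENNReal.ofReal ((longDist W i j.1) ^ ((d : ℝ) - η)))
        ≤ K * maximal g y := by
    intro y hy
    have step1 : ∀ j : {j : ι // longDist W i j < r},
        f j.1 / ENNReal.ofReal ((longDist W i j.1) ^ ((d : ℝ) - η))
          = f j.1 * ENNReal.ofReal ((longDist W i j.1) ^ α) := by
      intro j
      have hD : 0 < longDist W i j.1 := longDist_pos W i j.1
      rw [div_eq_mul_inv, ← ENNReal.ofReal_inv_of_pos (Real.rpow_pos_of_pos hD _)]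
      congr 1
      rw [← Real.rpow_neg hD.le]
      congr 1
      rw [hαdef]; ring
    calc (∑' j : {j : ι // longDist W i j < r}, f j.1
          / ENNReal.ofReal ((longDist W i j.1) ^ ((d : ℝ) - η)))
        = ∑' j : {j : ι // longDist W i j < r},
            f j.1 * ENNReal.ofReal ((longDist W i j.1) ^ α) := tsum_congr step1
      _ ≤ ∑' j : {j : ι // longDist W i j < r}, ENNReal.ofReal ((2:ℝ) ^ (-α)) *
            ∑' k : ℕ, if longDist W i j.1 < r / 2 ^ k
              then f j.1 * ENNReal.ofReal ((r / 2 ^ k) ^ α) else 0 := by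
          refine ENNReal.tsum_le_tsum fun j => ?_
          have hp := pointB (longDist_pos W i j.1) j.2 hα
          calc f j.1 * ENNReal.ofReal ((longDist W i j.1) ^ α)
              ≤ f j.1 * (ENNReal.ofReal ((2:ℝ) ^ (-α)) *
                ∑' k : ℕ, if longDist W i j.1 < r / 2 ^ k
                  then ENNReal.ofReal ((r / 2 ^ k) ^ α) else 0) := mul_le_mul_right hp _
            _ = ENNReal.ofReal ((2:ℝ) ^ (-α)) *
                ∑' k : ℕ, if longDist W i j.1 < r / 2 ^ k
                  then f j.1 * ENNReal.ofReal ((r / 2 ^ k) ^ α) else 0 := by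
                rw [mul_left_comm, ← ENNReal.tsum_mul_left]
                congr 1
                refine tsum_congr fun k => ?_
                rw [mul_ite, mul_zero]
      _ = ENNReal.ofReal ((2:ℝ) ^ (-α)) * ∑' k : ℕ,
            ∑' j : {j : ι // longDist W i j < r},
              (if longDist W i j.1 < r / 2 ^ k
                then f j.1 * ENNReal.ofReal ((r / 2 ^ k) ^ α) else 0) := by
          rw [ENNReal.tsum_mul_left]
          congr 1
          exact ENNReal.tsum_comm
      _ ≤ ENNReal.ofReal ((2:ℝ) ^ (-α)) * ∑' k : ℕ,
            ENNReal.ofReal ((r / 2 ^ k) ^ α) *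
              (ENNReal.ofReal ((4 * (r / 2 ^ k)) ^ d) * maximal g y) := by
          refine mul_le_mul_right (ENNReal.tsum_le_tsum fun k => ?_) _
          have htk : 0 < r / 2 ^ k := by positivity
          have hsplit : ∀ j : {j : ι // longDist W i j < r},
              (if longDist W i j.1 < r / 2 ^ k
                then f j.1 * ENNReal.ofReal ((r / 2 ^ k) ^ α) else 0)
              = ENNReal.ofReal ((r / 2 ^ k) ^ α) *
                (if longDist W i j.1 < r / 2 ^ k then f j.1 else 0) := by
            intro j
            rw [mul_ite, mul_zero, mul_comm]
          rw [tsum_congr hsplit, ENNReal.tsum_mul_left]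
          refine mul_le_mul_right ?_ _
          have hsub : (∑' j : {j : ι // longDist W i j < r},
              (if longDist W i j.1 < r / 2 ^ k then f j.1 else 0))
              ≤ ∑' j : ι, (if longDist W i j < r / 2 ^ k then f j else 0) :=
            le_of_eq_of_le
              (tsum_subtype {j : ι | longDist W i j < r}
                (fun j => if longDist W i j < r / 2 ^ k then f j else 0))
              (ENNReal.tsum_le_tsum fun j => Set.indicator_le_self _ _ j)
          exact hsub.trans (sumA hd W i htk g hy)
      _ = ENNReal.ofReal ((2:ℝ) ^ (-α)) * ∑' k : ℕ,
            (ENNReal.ofReal ((4:ℝ) ^ d * r ^ η) * maximal g y) * ENNReal.ofReal q ^ k := by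
          congr 1
          refine tsum_congr fun k => ?_
          rw [← mul_assoc, ← ENNReal.ofReal_mul (Real.rpow_nonneg (by positivity) _),
            tcompute hr d k, ← ENNReal.ofReal_pow hq0,
            ENNReal.ofReal_mul (by positivity)]
          ring
      _ = ENNReal.ofReal ((2:ℝ) ^ (-α)) *
            ((ENNReal.ofReal ((4:ℝ) ^ d * r ^ η) * maximal g y) * (1 - ENNReal.ofReal q)⁻¹) := by
          rw [ENNReal.tsum_mul_left, ENNReal.tsum_geometric]
      _ = K * maximal g y := by
          have h1 : (1 - ENNReal.ofReal q)⁻¹ = ENNReal.ofReal ((1 - q)⁻¹) := by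
            rw [ENNReal.ofReal_inv_of_pos (by linarith), ENNReal.ofReal_sub _ hq0,
              ENNReal.ofReal_one]
          have h2 : -α = (d:ℝ) - η := by rw [hαdef]; ring
          rw [h1, hKdef, hCdef, h2]
          rw [ENNReal.ofReal_mul (by positivity), ENNReal.ofReal_mul (by positivity),
            ENNReal.ofReal_mul (by positivity),
            ENNReal.ofReal_mul (Real.rpow_nonneg (by norm_num : (0:ℝ) ≤ 2) ((d:ℝ) - η))]
          ring
  have hinf : K * (⨅ (y : Fin d → ℝ) (_ : y ∈ cube (W.center i) (W.side i)), maximal g y)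
      = ⨅ (y : Fin d → ℝ) (_ : y ∈ cube (W.center i) (W.side i)), K * maximal g y := by
    rw [ENNReal.mul_iInf_of_ne hK0 hKtop]
    exact iInf_congr fun y => ENNReal.mul_iInf_of_ne hK0 hKtop
  rw [hinf]
  exact le_iInf fun y => le_iInf fun hy => key y hy
end

section
/- Let Ω be an ε-uniform domain with Whitney covering W, let s > 0, and Q ∈ W. Then ∑_{L ∈ W : Q ∈ SH(L)} ℓ(L)^{-s} ≤ C(d,ε,s) · ℓ(Q)^{-s}, where SH(L) denotes the ρ_ε-shadow of L, i.e. the set of Whitney cubes contained in the ball B(x_L, ρ_ε ℓ(L)) centered at the center of L. -/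
open MeasureTheory ENNReal

/-- The cube `Q` belongs to the `ρ`-shadow of `L`, i.e. `Q ⊂ B(x_L, ρ·ℓ(L))`. -/
def inShadow {d : ℕ} {Ω : Set (Fin d → ℝ)} {CW : ℝ} {ι : Type}
    (W : Whitney d Ω CW ι) (ρ : ℝ) (L Q : ι) : Prop :=
  cube (W.center Q) (W.side Q) ⊆ Metric.ball (W.center L) (ρ * W.side L)

section Aux

variable {d : ℕ} {Ω : Set (Fin d → ℝ)} {CW ρ : ℝ} {ι : Type}

lemma center_mem_cube (W : Whitney d Ω CW ι) (i : ι) :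
    W.center i ∈ cube (W.center i) (W.side i) :=
  Metric.mem_closedBall_self (by have := W.side_pos i; linarith)

/-- Lower bound on the side of a cube whose shadow contains `Q`. -/
lemma side_lower (W : Whitney d Ω CW ι) (hρ : 1 < ρ) (hCW : 1 ≤ CW)
    {L Q : ι} (h : inShadow W ρ L Q) : W.side Q ≤ (5 + ρ) * W.side L := by
  obtain ⟨x, hx, hxd⟩ := W.dist_upper L
  have h1 : CW * W.side Q ≤ Metric.infDist (W.center Q) (frontier Ω) :=
    W.dist_lower Q _ (center_mem_cube W Q)
  have h2 : Metric.infDist (W.center Q) (frontier Ω)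
      ≤ Metric.infDist x (frontier Ω) + dist (W.center Q) x :=
    Metric.infDist_le_infDist_add_dist
  have h3 : dist (W.center Q) (W.center L) < ρ * W.side L :=
    Metric.mem_ball.mp (h (center_mem_cube W Q))
  have h4 : dist (W.center L) x ≤ W.side L / 2 := by
    have := Metric.mem_closedBall.mp hx
    rwa [dist_comm]
  have h5 : dist (W.center Q) x ≤ dist (W.center Q) (W.center L) + dist (W.center L) x :=
    dist_triangle _ _ _
  have hL := W.side_pos L
  have hQ := W.side_pos Q
  have e1 : ρ * W.side L ≤ CW * (ρ * W.side L) := le_mul_of_one_le_left (by positivity) hCW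
  have e2 : W.side L / 2 ≤ CW * W.side L := by nlinarith
  have hkey : CW * W.side Q ≤ CW * ((5 + ρ) * W.side L) := by nlinarith
  have hCW0 : (0:ℝ) < CW := by linarith
  exact le_of_mul_le_mul_left hkey hCW0

/-- Volume counting: at a fixed scale, boundedly many cubes have `Q` in their shadow. -/
lemma shadow_count (W : Whitney d Ω CW ι) (hρ : 1 < ρ) (Q : ι) (k : ℤ)
    (t : Finset ι) (ht : ∀ i ∈ t, inShadow W ρ i Q ∧ W.side i = (2:ℝ) ^ k) :
    (t.card : ℝ) ≤ (2 * ρ + 2) ^ d := by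
  have h2k : (0:ℝ) < 2 ^ k := zpow_pos (by norm_num) k
  -- disjointness of the open balls
  have hdisj : (↑t : Set ι).PairwiseDisjoint
      (fun i => Metric.ball (W.center i) ((2:ℝ) ^ k / 2)) := by
    intro i hi j hj hij
    have hd := W.disj hij
    have hi' : Metric.ball (W.center i) ((2:ℝ) ^ k / 2)
        = interior (cube (W.center i) (W.side i)) := by
      rw [cube, interior_closedBall _ (by rw [(ht i hi).2]; positivity), (ht i hi).2]
    have hj' : Metric.ball (W.center j) ((2:ℝ) ^ k / 2)
        = interior (cube (W.center j) (W.side j)) := by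
      rw [cube, interior_closedBall _ (by rw [(ht j hj).2]; positivity), (ht j hj).2]
    simpa [Function.onFun, hi', hj'] using hd
  have hsum : volume (⋃ i ∈ t, Metric.ball (W.center i) ((2:ℝ) ^ k / 2))
      = ∑ i ∈ t, volume (Metric.ball (W.center i) ((2:ℝ) ^ k / 2)) :=
    measure_biUnion_finset hdisj (fun i _ => measurableSet_ball)
  have hvol : ∀ i : ι, volume (Metric.ball (W.center i) ((2:ℝ) ^ k / 2))
      = ENNReal.ofReal (((2:ℝ) ^ k) ^ d) := by
    intro i
    rw [Real.volume_pi_ball _ (by positivity), Fintype.card_fin]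
    congr 1
    ring
  have hsub : (⋃ i ∈ t, Metric.ball (W.center i) ((2:ℝ) ^ k / 2))
      ⊆ Metric.closedBall (W.center Q) ((ρ + 1) * 2 ^ k) := by
    intro y hy
    simp only [Set.mem_iUnion] at hy
    obtain ⟨i, hi, hyi⟩ := hy
    have h3 : dist (W.center Q) (W.center i) < ρ * W.side i :=
      Metric.mem_ball.mp ((ht i hi).1 (center_mem_cube W Q))
    rw [(ht i hi).2] at h3
    have hyi' : dist y (W.center i) < (2:ℝ) ^ k / 2 := Metric.mem_ball.mp hyi
    have : dist y (W.center Q) ≤ dist y (W.center i) + dist (W.center i) (W.center Q) :=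
      dist_triangle _ _ _
    rw [dist_comm (W.center i)] at this
    have : dist y (W.center Q) ≤ (ρ + 1) * 2 ^ k := by nlinarith
    exact Metric.mem_closedBall.mpr this
  have hbig : volume (Metric.closedBall (W.center Q) ((ρ + 1) * 2 ^ k))
      = ENNReal.ofReal ((2 * ((ρ + 1) * 2 ^ k)) ^ d) := by
    rw [Real.volume_pi_closedBall _ (by positivity), Fintype.card_fin]
  have hchain : (t.card : ℝ≥0∞) * ENNReal.ofReal (((2:ℝ) ^ k) ^ d)
      ≤ ENNReal.ofReal ((2 * ((ρ + 1) * 2 ^ k)) ^ d) := by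
    calc (t.card : ℝ≥0∞) * ENNReal.ofReal (((2:ℝ) ^ k) ^ d)
        = ∑ i ∈ t, volume (Metric.ball (W.center i) ((2:ℝ) ^ k / 2)) := by
          simp [hvol, Finset.sum_const, nsmul_eq_mul]
      _ = volume (⋃ i ∈ t, Metric.ball (W.center i) ((2:ℝ) ^ k / 2)) := hsum.symm
      _ ≤ volume (Metric.closedBall (W.center Q) ((ρ + 1) * 2 ^ k)) := measure_mono hsub
      _ = _ := hbig
  rw [← ENNReal.ofReal_natCast, ← ENNReal.ofReal_mul (by positivity)] at hchain
  have hreal : (t.card : ℝ) * ((2:ℝ) ^ k) ^ d ≤ (2 * ((ρ + 1) * 2 ^ k)) ^ d :=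
    (ENNReal.ofReal_le_ofReal_iff (by positivity)).mp hchain
  have hfac : (2 * ((ρ + 1) * (2:ℝ) ^ k)) ^ d = (2 * ρ + 2) ^ d * ((2:ℝ) ^ k) ^ d := by
    rw [← mul_pow]; ring_nf
  rw [hfac] at hreal
  have hpow : (0:ℝ) < ((2:ℝ) ^ k) ^ d := by positivity
  exact le_of_mul_le_mul_right hreal hpow

end Aux

/-- for a Whitney covering of an open set, `s > 0` and a cube `Q`,
`∑_{L : Q ∈ SH(L)} ℓ(L)^{-s} ≤ C · ℓ(Q)^{-s}`, the constant depending only on `d`, the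
shadow ratio `ρ`, `s` and the Whitney constant. -/
theorem stmt11 (d : ℕ) (hd : 0 < d) (ρ s CW : ℝ) (hρ : 1 < ρ) (hs : 0 < s) (hCW : 1 ≤ CW) :
    ∃ C : ℝ, 0 < C ∧
      ∀ (Ω : Set (Fin d → ℝ)), IsOpen Ω → Ω ≠ Set.univ →
      ∀ (ι : Type) (W : Whitney d Ω CW ι) (Q : ι),
        (∑' L : {L : ι // inShadow W ρ L Q}, ENNReal.ofReal (W.side L.1 ^ (-s)))
          ≤ ENNReal.ofReal (C * W.side Q ^ (-s)) := by
  classical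
  obtain ⟨m, hm⟩ := pow_unbounded_of_one_lt (5 + ρ) (one_lt_two (α := ℝ))
  have hgeo : (2:ℝ) ^ (-s) < 1 :=
    Real.rpow_lt_one_of_one_lt_of_neg one_lt_two (neg_neg_iff_pos.mpr hs)
  have hgeo0 : (0:ℝ) ≤ (2:ℝ) ^ (-s) := Real.rpow_nonneg (by norm_num) _
  have hG : (0:ℝ) < (1 - (2:ℝ) ^ (-s))⁻¹ := by
    rw [inv_pos]; linarith
  set N : ℝ := (2 * ρ + 2) ^ d with hN
  set A : ℝ := ((2:ℝ) ^ m) ^ s with hA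
  set G : ℝ := (1 - (2:ℝ) ^ (-s))⁻¹ with hGdef
  have hN0 : 0 < N := by positivity
  have hA0 : 0 < A := by positivity
  refine ⟨N * A * G, by positivity, ?_⟩
  intro Ω hΩo hΩu ι W Q
  set kQ : ℤ := (W.dyadic Q).choose with hkQdef
  have hkQ : W.side Q = (2:ℝ) ^ kQ := (W.dyadic Q).choose_spec
  set k₀ : ℤ := kQ - m with hk₀
  -- the exponent map
  set σ := {L : ι // inShadow W ρ L Q} with hσ
  have hexp : ∀ L : σ, W.side L.1 = (2:ℝ) ^ (k₀ + (((W.dyadic L.1).choose - k₀).toNat : ℤ)) := by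
    intro L
    have hkL : W.side L.1 = (2:ℝ) ^ (W.dyadic L.1).choose := (W.dyadic L.1).choose_spec
    set kL : ℤ := (W.dyadic L.1).choose
    have hlow : W.side Q ≤ (5 + ρ) * W.side L.1 := side_lower W hρ hCW L.2
    have hle : (2:ℝ) ^ kQ ≤ (2:ℝ) ^ ((m : ℤ) + kL) := by
      rw [zpow_add₀ (two_ne_zero) (m:ℤ) kL, ← hkQ]
      have h2m : ((2:ℝ) ^ (m:ℤ)) = (2:ℝ) ^ m := zpow_natCast 2 m
      have hsL := W.side_pos L.1
      calc W.side Q ≤ (5 + ρ) * W.side L.1 := hlow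
        _ ≤ (2:ℝ) ^ m * W.side L.1 := by nlinarith
        _ = (2:ℝ) ^ (m:ℤ) * (2:ℝ) ^ kL := by rw [h2m, hkL]
    have hkk : kQ ≤ (m : ℤ) + kL := (zpow_le_zpow_iff_right₀ (by norm_num : (1:ℝ) < 2)).mp hle
    have hge : k₀ ≤ kL := by omega
    rw [hkL]
    congr 1
    omega
  set e : σ → ℕ := fun L => ((W.dyadic L.1).choose - k₀).toNat with he
  have hside : ∀ L : σ, W.side L.1 = (2:ℝ) ^ (k₀ + (e L : ℤ)) := hexp
  -- finiteness and cardinality of fibers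
  have hSfin : ∀ n : ℕ, ({i : ι | inShadow W ρ i Q ∧ W.side i = (2:ℝ) ^ (k₀ + (n:ℤ))}).Finite := by
    intro n
    by_contra hinf
    obtain ⟨t, hts, htc⟩ := Set.Infinite.exists_subset_card_eq hinf (⌊N⌋₊ + 1)
    have hb := shadow_count W hρ Q (k₀ + (n:ℤ)) t (fun i hi => hts hi)
    rw [htc] at hb
    have : N < (⌊N⌋₊ + 1 : ℝ) := Nat.lt_floor_add_one N
    push_cast at hb
    linarith
  have hfibinj : ∀ n : ℕ, Function.Injective
      (fun L : {L : σ // e L = n} => (⟨L.1.1, L.1.2, by rw [hside L.1, L.2]⟩ :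
        {i : ι | inShadow W ρ i Q ∧ W.side i = (2:ℝ) ^ (k₀ + (n:ℤ))})) := by
    intro n a b hab
    have h' : (a.1.1 : ι) = b.1.1 := by
      have h'' := congrArg Subtype.val hab
      simpa using h''
    exact Subtype.ext (Subtype.ext h')
  have hfibfin : ∀ n : ℕ, Finite {L : σ // e L = n} := by
    intro n
    haveI := (hSfin n).to_subtype
    exact Finite.of_injective _ (hfibinj n)
  have hcard : ∀ n : ℕ, (Nat.card {L : σ // e L = n} : ℝ) ≤ N := by
    intro n
    haveI := (hSfin n).to_subtype
    have h1 : Nat.card {L : σ // e L = n}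
        ≤ Nat.card {i : ι | inShadow W ρ i Q ∧ W.side i = (2:ℝ) ^ (k₀ + (n:ℤ))} :=
      Nat.card_le_card_of_injective _ (hfibinj n)
    have h2 : (Nat.card {i : ι | inShadow W ρ i Q ∧ W.side i = (2:ℝ) ^ (k₀ + (n:ℤ))} : ℝ)
        ≤ N := by
      rw [Nat.card_coe_set_eq, Set.ncard_eq_toFinset_card _ (hSfin n)]
      exact shadow_count W hρ Q (k₀ + (n:ℤ)) (hSfin n).toFinset
        (fun i hi => (hSfin n).mem_toFinset.mp hi)
    calc (Nat.card {L : σ // e L = n} : ℝ) ≤ _ := Nat.cast_le.mpr h1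
      _ ≤ N := h2
  -- bound for each fiber
  have hfib : ∀ n : ℕ, (∑' L : {L : σ // e L = n}, ENNReal.ofReal (W.side L.1.1 ^ (-s)))
      ≤ ENNReal.ofReal N * ENNReal.ofReal (((2:ℝ) ^ (k₀ + (n:ℤ))) ^ (-s)) := by
    intro n
    haveI := hfibfin n
    haveI : Fintype {L : σ // e L = n} := Fintype.ofFinite _
    rw [tsum_fintype]
    have hconst : ∀ L : {L : σ // e L = n},
        ENNReal.ofReal (W.side L.1.1 ^ (-s))
          = ENNReal.ofReal (((2:ℝ) ^ (k₀ + (n:ℤ))) ^ (-s)) := by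
      intro L; rw [hside L.1, L.2]
    rw [Finset.sum_congr rfl (fun L _ => hconst L), Finset.sum_const, Finset.card_univ,
      nsmul_eq_mul]
    gcongr
    rw [← ENNReal.ofReal_natCast]
    apply ENNReal.ofReal_le_ofReal
    rw [← Nat.card_eq_fintype_card]
    exact hcard n
  -- geometric factorization of the scale weights
  have hcn : ∀ n : ℕ, ((2:ℝ) ^ (k₀ + (n:ℤ))) ^ (-s)
      = ((2:ℝ) ^ k₀) ^ (-s) * ((2:ℝ) ^ (-s)) ^ n := by
    intro n
    rw [zpow_add₀ (two_ne_zero) k₀ (n:ℤ), Real.mul_rpow (by positivity) (by positivity)]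
    congr 1
    rw [zpow_natCast, ← Real.rpow_natCast (2:ℝ) n, ← Real.rpow_natCast ((2:ℝ) ^ (-s)) n,
      ← Real.rpow_mul (by norm_num), ← Real.rpow_mul (by norm_num), mul_comm]
  have hB : ((2:ℝ) ^ k₀) ^ (-s) = W.side Q ^ (-s) * A := by
    rw [hkQ, hA]
    rw [← Real.rpow_intCast 2 k₀, ← Real.rpow_intCast 2 kQ, ← Real.rpow_natCast 2 m,
      ← Real.rpow_mul (by norm_num), ← Real.rpow_mul (by norm_num),
      ← Real.rpow_mul (by norm_num), ← Real.rpow_add (by norm_num)]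
    congr 1
    rw [hk₀]
    push_cast
    ring
  -- assemble
  calc (∑' L : σ, ENNReal.ofReal (W.side L.1 ^ (-s)))
      = ∑' (n : ℕ) (L : {L : σ // e L = n}), ENNReal.ofReal (W.side L.1.1 ^ (-s)) := by
        rw [← Equiv.tsum_eq (Equiv.sigmaFiberEquiv e)
          (fun L => ENNReal.ofReal (W.side L.1 ^ (-s))), ENNReal.tsum_sigma']
        rfl
    _ ≤ ∑' (n : ℕ), ENNReal.ofReal N * ENNReal.ofReal (((2:ℝ) ^ (k₀ + (n:ℤ))) ^ (-s)) :=
        ENNReal.tsum_le_tsum hfib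
    _ = ∑' (n : ℕ), ENNReal.ofReal N * (ENNReal.ofReal (((2:ℝ) ^ k₀) ^ (-s))
          * (ENNReal.ofReal ((2:ℝ) ^ (-s))) ^ n) := by
        refine tsum_congr fun n => ?_
        rw [hcn n, ENNReal.ofReal_mul (by positivity), ENNReal.ofReal_pow hgeo0]
    _ = ENNReal.ofReal N * (ENNReal.ofReal (((2:ℝ) ^ k₀) ^ (-s))
          * ∑' (n : ℕ), (ENNReal.ofReal ((2:ℝ) ^ (-s))) ^ n) := by
        rw [ENNReal.tsum_mul_left, ENNReal.tsum_mul_left]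
    _ = ENNReal.ofReal N * (ENNReal.ofReal (((2:ℝ) ^ k₀) ^ (-s)) * ENNReal.ofReal G) := by
        rw [ENNReal.tsum_geometric]
        congr 1
        rw [hGdef, ENNReal.ofReal_inv_of_pos (by linarith), ENNReal.ofReal_sub 1 hgeo0,
          ENNReal.ofReal_one]
    _ = ENNReal.ofReal (N * A * G * W.side Q ^ (-s)) := by
        rw [← ENNReal.ofReal_mul (by positivity), ← ENNReal.ofReal_mul (by positivity)]
        congr 1
        rw [hB]
        ring
end

section
/- Let Ω ⊂ ℝ^d be a bounded open set with a Whitney covering W, let 1 < p < ∞, 0 < s < 1, 1 ≤ q < ∞, and f ∈ L^1_loc(Ω). Then ∑_{Q ∈ W} ∫_{8Q ∩ Ω} |f(x) - f_Q|^p / ℓ(Q)^{sp} dx ≤ C ∑_{Q ∈ W} ∫_Q (∫_Q |f(x)-f(ξ)|^q / |x-ξ|^{sq+d} dξ)^{p/q} dx + C ∑_{Q∈W} ∫_{(8Q∖Q)∩Ω} (∫_Q |f(x)-f(ξ)|^q/|x-ξ|^{sq+d} dξ)^{p/q} dx, where f_Q denotes the mean of f on Q and C depends on d, s, p, q. -/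
open MeasureTheory ENNReal

open MeasureTheory

private theorem stmt14_key {d : ℕ} (p q s : ℝ) (hp1 : 1 < p) (hq : 1 ≤ q) (hs0 : 0 < s)
    (c : Fin d → ℝ) (L : ℝ) (hL : 0 < L) (f : (Fin d → ℝ) → ℝ)
    (hf : IntegrableOn f (cube c L) volume) (x : Fin d → ℝ)
    (hx : x ∈ cube c (8 * L)) :
    ENNReal.ofReal (|f x - ⨍ ξ in cube c L, f ξ| ^ p / L ^ (s * p)) ≤
      ENNReal.ofReal ((9/2 : ℝ) ^ ((s * q + d) * (p / q))) *
        (∫⁻ ξ in cube c L, ENNReal.ofReal (|f x - f ξ| ^ q / ‖x - ξ‖ ^ (s * q + d))) ^ (p / q) := by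
  have hq0 : (0:ℝ) < q := lt_of_lt_of_le one_pos hq
  have hp0 : (0:ℝ) < p := lt_trans one_pos hp1
  set Q : Set (Fin d → ℝ) := cube c L with hQdef
  have hQmeas : MeasurableSet Q := Metric.isClosed_closedBall.measurableSet
  have hvol : volume Q = ENNReal.ofReal (L ^ d) := by
    rw [hQdef, cube, Real.volume_pi_closedBall c (by positivity : (0:ℝ) ≤ L / 2)]
    rw [Fintype.card_fin]
    congr 1
    ring
  have hLd : (0:ℝ) < L ^ d := by positivity
  have hvolne0 : volume Q ≠ 0 := by rw [hvol]; simpa using hLd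
  have hvolnetop : volume Q ≠ ⊤ := by rw [hvol]; exact ENNReal.ofReal_ne_top
  set r : ℝ := (volume Q).toReal with hr
  have hr0 : 0 < r := ENNReal.toReal_pos hvolne0 hvolnetop
  have hconst : IntegrableOn (fun _ => f x) Q volume := by
    exact integrableOn_const hvolnetop
  have hsub : IntegrableOn (fun ξ => f x - f ξ) Q volume := hconst.sub hf
  have habs : IntegrableOn (fun ξ => |f x - f ξ|) Q volume := hsub.abs
  set A : ℝ := ∫ ξ in Q, |f x - f ξ| with hA
  have h1 : |f x - ⨍ ξ in Q, f ξ| ≤ A / r := by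
    rw [setAverage_eq, smul_eq_mul, measureReal_def]
    have heq : f x - (volume Q).toReal⁻¹ * ∫ ξ in Q, f ξ
        = r⁻¹ * ∫ ξ in Q, (f x - f ξ) := by
      rw [integral_sub hconst hf, setIntegral_const, smul_eq_mul, measureReal_def, ← hr]
      field_simp
    rw [heq, abs_mul, abs_inv, abs_of_pos hr0, div_eq_inv_mul]
    gcongr
    simpa [Real.norm_eq_abs] using
      norm_integral_le_integral_norm (μ := volume.restrict Q) (fun ξ => f x - f ξ)
  set g : (Fin d → ℝ) → ℝ≥0∞ := fun ξ => ENNReal.ofReal |f x - f ξ| with hg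
  have hgmeas : AEMeasurable g (volume.restrict Q) :=
    ENNReal.measurable_ofReal.comp_aemeasurable
      (continuous_abs.measurable.comp_aemeasurable (aemeasurable_const.sub hf.aemeasurable))
  set J : ℝ≥0∞ := ∫⁻ ξ in Q, g ξ with hJ
  have h2 : ENNReal.ofReal A = J := by
    rw [hA, ofReal_integral_eq_lintegral_ofReal habs
      (Filter.Eventually.of_forall fun ξ => abs_nonneg _)]
  set I : ℝ≥0∞ := ∫⁻ ξ in Q, ENNReal.ofReal (|f x - f ξ| ^ q / ‖x - ξ‖ ^ (s * q + d)) with hI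
  set K1 : ℝ := (9 * L / 2) ^ (s * q + (d:ℝ)) with hK1
  have hK1pos : 0 < K1 := by rw [hK1]; positivity
  -- step C : pointwise bound on g^q
  have h4 : (∫⁻ ξ in Q, g ξ ^ q) ≤ ENNReal.ofReal K1 * I := by
    rw [hI, ← lintegral_const_mul' _ _ ENNReal.ofReal_ne_top]
    refine setLIntegral_mono' hQmeas fun ξ hξ => ?_
    have hdist : ‖x - ξ‖ ≤ 9 * L / 2 := by
      have hx1 : dist x c ≤ 8 * L / 2 := hx
      have hx2 : dist c ξ ≤ L / 2 := by rw [dist_comm]; exact hξ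
      calc ‖x - ξ‖ = dist x ξ := (dist_eq_norm x ξ).symm
        _ ≤ dist x c + dist c ξ := dist_triangle x c ξ
        _ ≤ 8 * L / 2 + L / 2 := add_le_add hx1 hx2
        _ = 9 * L / 2 := by ring
    rw [hg, ENNReal.ofReal_rpow_of_nonneg (abs_nonneg _) hq0.le,
      ← ENNReal.ofReal_mul hK1pos.le]
    apply ENNReal.ofReal_le_ofReal
    rcases eq_or_ne x ξ with hxx | hxx
    · rw [hxx]
      simp [Real.zero_rpow hq0.ne']
    · have hnorm : 0 < ‖x - ξ‖ := by simpa [sub_eq_zero] using hxx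
      have hb : ‖x - ξ‖ ^ (s * q + (d:ℝ)) ≤ K1 := by
        rw [hK1]; exact Real.rpow_le_rpow hnorm.le hdist (by positivity)
      calc |f x - f ξ| ^ q
          = |f x - f ξ| ^ q / ‖x - ξ‖ ^ (s * q + (d:ℝ)) * ‖x - ξ‖ ^ (s * q + (d:ℝ)) := by
            field_simp
        _ ≤ |f x - f ξ| ^ q / ‖x - ξ‖ ^ (s * q + (d:ℝ)) * K1 := by gcongr
        _ = K1 * (|f x - f ξ| ^ q / ‖x - ξ‖ ^ (s * q + (d:ℝ))) := by ring
  -- Hölder / Jensen step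
  have h3 : J ≤ (∫⁻ ξ in Q, g ξ ^ q) ^ (1/q) * (volume Q) ^ (1 - 1/q) := by
    rcases eq_or_lt_of_le hq with hq1 | hq1
    · simp [hJ, ← hq1]
    · have hc : q.HolderConjugate (Real.conjExponent q) := Real.HolderConjugate.conjExponent hq1
      have hh := ENNReal.lintegral_mul_le_Lp_mul_Lq (volume.restrict Q) hc hgmeas
        (aemeasurable_const (b := (1:ℝ≥0∞)))
      simp only [Pi.mul_apply, mul_one, ENNReal.one_rpow, lintegral_const,
        Measure.restrict_apply MeasurableSet.univ, Set.univ_inter, one_mul] at hh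
      have hconj : 1 / Real.conjExponent q = 1 - 1/q := by
        rw [Real.conjExponent]
        field_simp
      rw [hconj] at hh
      exact hh
  -- chain
  have hchain : ENNReal.ofReal |f x - ⨍ ξ in Q, f ξ| ≤
      (ENNReal.ofReal K1) ^ (1/q) * I ^ (1/q) * (volume Q) ^ (-(1/q)) := by
    calc ENNReal.ofReal |f x - ⨍ ξ in Q, f ξ|
        ≤ ENNReal.ofReal (A / r) := ENNReal.ofReal_le_ofReal h1
      _ = J * (volume Q)⁻¹ := by
          rw [ENNReal.ofReal_div_of_pos hr0, h2, hr, ENNReal.ofReal_toReal hvolnetop,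
            div_eq_mul_inv]
      _ ≤ (ENNReal.ofReal K1 * I) ^ (1/q) * (volume Q) ^ (1 - 1/q) * (volume Q)⁻¹ := by
          refine mul_le_mul' (h3.trans ?_) le_rfl
          gcongr
      _ = (ENNReal.ofReal K1) ^ (1/q) * I ^ (1/q) * ((volume Q) ^ (1 - 1/q) * (volume Q)⁻¹) := by
          rw [ENNReal.mul_rpow_of_nonneg _ _ (by positivity : (0:ℝ) ≤ 1/q)]
          ring
      _ = (ENNReal.ofReal K1) ^ (1/q) * I ^ (1/q) * (volume Q) ^ (-(1/q)) := by
          congr 1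
          rw [← ENNReal.rpow_neg_one, ← ENNReal.rpow_add _ _ hvolne0 hvolnetop]
          congr 1
          ring
  have hpq_nonneg : (0:ℝ) ≤ p/q := by positivity
  have hP := ENNReal.rpow_le_rpow hchain hp0.le
  rw [ENNReal.ofReal_rpow_of_nonneg (abs_nonneg _) hp0.le,
    ENNReal.mul_rpow_of_nonneg _ _ hp0.le, ENNReal.mul_rpow_of_nonneg _ _ hp0.le,
    ← ENNReal.rpow_mul, ← ENNReal.rpow_mul, ← ENNReal.rpow_mul] at hP
  have hoq : 1/q * p = p/q := by field_simp
  rw [hoq] at hP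
  have hnq : -(1/q) * p = -(p/q) := by field_simp
  rw [hnq] at hP
  -- now hP : ofReal (|f x - ⨍|^p) ≤ ofReal K1 ^(p/q) * I^(p/q) * volQ^(-(p/q))
  have hLsp : (0:ℝ) < L ^ (s*p) := Real.rpow_pos_of_pos hL _
  rw [ENNReal.ofReal_div_of_pos hLsp, ENNReal.div_eq_inv_mul]
  calc (ENNReal.ofReal (L ^ (s*p)))⁻¹ * ENNReal.ofReal (|f x - ⨍ ξ in Q, f ξ| ^ p)
      ≤ (ENNReal.ofReal (L ^ (s*p)))⁻¹ *
        ((ENNReal.ofReal K1) ^ (p/q) * I ^ (p/q) * (volume Q) ^ (-(p/q))) :=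
        mul_le_mul' le_rfl hP
    _ = ((ENNReal.ofReal (L ^ (s*p)))⁻¹ * (ENNReal.ofReal K1) ^ (p/q)
          * (volume Q) ^ (-(p/q))) * I ^ (p/q) := by ring
    _ = ENNReal.ofReal ((9/2 : ℝ) ^ ((s * q + d) * (p / q))) * I ^ (p/q) := by
        congr 1
        rw [hvol, ENNReal.ofReal_rpow_of_pos hK1pos, ENNReal.ofReal_rpow_of_pos hLd,
          ← ENNReal.ofReal_inv_of_pos hLsp, ← ENNReal.ofReal_mul (by positivity),
          ← ENNReal.ofReal_mul (by positivity)]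
        congr 1
        rw [hK1, show (9 * L / 2 : ℝ) = (9/2) * L by ring,
          Real.mul_rpow (by norm_num) hL.le,
          Real.mul_rpow (by positivity) (by positivity),
          ← Real.rpow_natCast L d,
          ← Real.rpow_mul (by norm_num) , ← Real.rpow_mul hL.le, ← Real.rpow_mul hL.le,
          ← Real.rpow_neg hL.le]
        have hexp : -(s*p) + ((s*q+(d:ℝ))*(p/q)) + (d:ℝ) * -(p/q) = 0 := by
          field_simp
          ring
        calc L ^ (-(s*p)) * ((9/2:ℝ)^((s*q+(d:ℝ))*(p/q)) * L^((s*q+(d:ℝ))*(p/q)))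
              * L^((d:ℝ) * -(p/q))
            = (9/2:ℝ)^((s*q+(d:ℝ))*(p/q))
              * L ^ (-(s*p) + ((s*q+(d:ℝ))*(p/q)) + (d:ℝ) * -(p/q)) := by
              rw [Real.rpow_add hL, Real.rpow_add hL]
              ring
          _ = _ := by rw [hexp, Real.rpow_zero, mul_one]


/-- local approximation by means on Whitney cubes. With `f_Q` the mean of
`f` on `Q`, `∑_Q ∫_{8Q∩Ω} |f-f_Q|^p/ℓ(Q)^{sp} ≤ C (∑_Q ∫_Q (∫_Q ...)^{p/q} +
∑_Q ∫_{(8Q∖Q)∩Ω} (∫_Q ...)^{p/q})`. -/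
theorem stmt14 (d : ℕ) (hd : 0 < d) (p q s : ℝ) (hp1 : 1 < p) (hq : 1 ≤ q)
    (hs0 : 0 < s) (hs1 : s < 1) :
    ∃ C : ℝ, 0 < C ∧
      ∀ (CW : ℝ), 1 ≤ CW →
      ∀ (Ω : Set (Fin d → ℝ)), IsOpen Ω → Bornology.IsBounded Ω → Ω ≠ Set.univ →
      ∀ (ι : Type) (W : Whitney d Ω CW ι)
        (f : (Fin d → ℝ) → ℝ), MeasureTheory.LocallyIntegrableOn f Ω volume →
        (∑' Q : ι, ∫⁻ x in (cube (W.center Q) (8 * W.side Q)) ∩ Ω,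
            ENNReal.ofReal
              (|f x - ⨍ ξ in cube (W.center Q) (W.side Q), f ξ| ^ p / W.side Q ^ (s * p)))
          ≤ ENNReal.ofReal C *
            ((∑' Q : ι, ∫⁻ x in cube (W.center Q) (W.side Q),
                (∫⁻ ξ in cube (W.center Q) (W.side Q),
                  ENNReal.ofReal (|f x - f ξ| ^ q / ‖x - ξ‖ ^ (s * q + d))) ^ (p / q))
              + ∑' Q : ι, ∫⁻ x in ((cube (W.center Q) (8 * W.side Q)) \
                    (cube (W.center Q) (W.side Q))) ∩ Ω,
                  (∫⁻ ξ in cube (W.center Q) (W.side Q),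
                    ENNReal.ofReal (|f x - f ξ| ^ q / ‖x - ξ‖ ^ (s * q + d))) ^ (p / q)) := by
  refine ⟨(9/2 : ℝ) ^ ((s * q + d) * (p / q)), by positivity,
    fun CW hCW Ω hΩopen hΩbdd hΩne ι W f hloc => ?_⟩
  set C : ℝ := (9/2 : ℝ) ^ ((s * q + d) * (p / q)) with hC
  set I : ι → (Fin d → ℝ) → ℝ≥0∞ := fun i x =>
    ∫⁻ ξ in cube (W.center i) (W.side i),
      ENNReal.ofReal (|f x - f ξ| ^ q / ‖x - ξ‖ ^ (s * q + d)) with hIdef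
  have hcube : ∀ i : ι,
      (∫⁻ x in (cube (W.center i) (8 * W.side i)) ∩ Ω,
        ENNReal.ofReal
          (|f x - ⨍ ξ in cube (W.center i) (W.side i), f ξ| ^ p / W.side i ^ (s * p)))
      ≤ ENNReal.ofReal C *
          ((∫⁻ x in cube (W.center i) (W.side i), I i x ^ (p / q)) +
            ∫⁻ x in ((cube (W.center i) (8 * W.side i)) \
                (cube (W.center i) (W.side i))) ∩ Ω, I i x ^ (p / q)) := by
    intro i
    set c := W.center i
    set L := W.side i with hLdef
    have hL : 0 < L := W.side_pos i
    have hQΩ : cube c L ⊆ Ω := by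
      rw [← W.covers]
      exact Set.subset_iUnion (fun j => cube (W.center j) (W.side j)) i
    have hfQ : IntegrableOn f (cube c L) volume :=
      hloc.integrableOn_compact_subset hQΩ (isCompact_closedBall c (L / 2))
    have hmeas : MeasurableSet ((cube c (8 * L)) ∩ Ω) :=
      Metric.isClosed_closedBall.measurableSet.inter hΩopen.measurableSet
    have hsub : (cube c (8 * L)) ∩ Ω ⊆
        cube c L ∪ (((cube c (8 * L)) \ (cube c L)) ∩ Ω) := by
      intro x hx
      by_cases hxQ : x ∈ cube c L
      · exact Or.inl hxQ
      · exact Or.inr ⟨⟨hx.1, hxQ⟩, hx.2⟩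
    calc ∫⁻ x in (cube c (8 * L)) ∩ Ω,
          ENNReal.ofReal (|f x - ⨍ ξ in cube c L, f ξ| ^ p / L ^ (s * p))
        ≤ ∫⁻ x in (cube c (8 * L)) ∩ Ω, ENNReal.ofReal C * I i x ^ (p / q) :=
          setLIntegral_mono' hmeas fun x hx =>
            stmt14_key p q s hp1 hq hs0 c L hL f hfQ x hx.1
      _ = ENNReal.ofReal C * ∫⁻ x in (cube c (8 * L)) ∩ Ω, I i x ^ (p / q) :=
          lintegral_const_mul' _ _ ENNReal.ofReal_ne_top
      _ ≤ ENNReal.ofReal C *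
            ∫⁻ x in cube c L ∪ (((cube c (8 * L)) \ (cube c L)) ∩ Ω), I i x ^ (p / q) := by
          gcongr
      _ ≤ ENNReal.ofReal C *
            ((∫⁻ x in cube c L, I i x ^ (p / q)) +
              ∫⁻ x in ((cube c (8 * L)) \ (cube c L)) ∩ Ω, I i x ^ (p / q)) := by
          gcongr
          exact lintegral_union_le _ _ _
  calc (∑' Q : ι, ∫⁻ x in (cube (W.center Q) (8 * W.side Q)) ∩ Ω,
          ENNReal.ofReal
            (|f x - ⨍ ξ in cube (W.center Q) (W.side Q), f ξ| ^ p / W.side Q ^ (s * p)))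
      ≤ ∑' Q : ι, ENNReal.ofReal C *
          ((∫⁻ x in cube (W.center Q) (W.side Q), I Q x ^ (p / q)) +
            ∫⁻ x in ((cube (W.center Q) (8 * W.side Q)) \
                (cube (W.center Q) (W.side Q))) ∩ Ω, I Q x ^ (p / q)) :=
        ENNReal.tsum_le_tsum hcube
    _ = ENNReal.ofReal C *
          ((∑' Q : ι, ∫⁻ x in cube (W.center Q) (W.side Q), I Q x ^ (p / q)) +
            ∑' Q : ι, ∫⁻ x in ((cube (W.center Q) (8 * W.side Q)) \
                (cube (W.center Q) (W.side Q))) ∩ Ω, I Q x ^ (p / q)) := by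
        rw [ENNReal.tsum_mul_left, ENNReal.tsum_add]
end
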